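/- Let ν ≥ 2 be an integer and let z : (−∞, 0] → ℝ be continuous with z(0) = 1 and 1 = z(s) − c_ν · s · z(s)^ν for all s ≤ 0. Then 0 < z(s) ≤ 1 for all s ≤ 0, z is strictly monotone increasing on (−∞, 0], and z(s) → 0 as s → −∞. -/
import Mathlib


/-- Let `ν ≥ 2` and let `z : (−∞, 0] → ℝ` be continuous with
`z(0) = 1` and `1 = z(s) − c_ν s z(s)^ν` for all `s ≤ 0`.  Then `0 < z(s) ≤ 1`
for all `s ≤ 0`, `z` is strictly monotone increasing on `(−∞, 0]`, and
`z(s) → 0` as `s → −∞`. -/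
theorem catalan_branch_behavior_on_negative_axis
    (ν : ℕ) (hν : 2 ≤ ν)
    (c : ℝ) (hc : c = 2 * ν * (Nat.choose (2 * ν - 1) (ν - 1)))
    (z : ℝ → ℝ) (hcont : ContinuousOn z (Set.Iic 0)) (hz0 : z 0 = 1)
    (hrel : ∀ s ≤ (0 : ℝ), 1 = z s - c * s * z s ^ ν) :
    (∀ s ≤ (0 : ℝ), 0 < z s ∧ z s ≤ 1) ∧
      StrictMonoOn z (Set.Iic 0) ∧
      Filter.Tendsto z Filter.atBot (nhds 0) := by
  have hchoose : (0:ℝ) < (Nat.choose (2 * ν - 1) (ν - 1) : ℝ) := by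
    exact_mod_cast Nat.choose_pos (by omega)
  have hν0 : (0:ℝ) < (ν : ℝ) := by exact_mod_cast (by omega : 0 < ν)
  have hc0 : 0 < c := by
    rw [hc]; positivity
  have hne : ∀ s ≤ (0:ℝ), z s ≠ 0 := by
    intro s hs h0
    have h := hrel s hs
    rw [h0, zero_pow (by omega : ν ≠ 0)] at h
    norm_num at h
  have hpos : ∀ s ≤ (0:ℝ), 0 < z s := by
    intro s hs
    by_contra h
    push_neg at h
    have hlt : z s < 0 := lt_of_le_of_ne h (hne s hs)
    have hiv := intermediate_value_Icc hs (hcont.mono Set.Icc_subset_Iic_self)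
    have h0mem : (0:ℝ) ∈ Set.Icc (z s) (z 0) := ⟨hlt.le, by rw [hz0]; norm_num⟩
    obtain ⟨t, ht, hzt⟩ := hiv h0mem
    exact hne t ht.2 hzt
  have hle : ∀ s ≤ (0:ℝ), z s ≤ 1 := by
    intro s hs
    have h := hrel s hs
    have hx : c * s * z s ^ ν ≤ 0 :=
      mul_nonpos_of_nonpos_of_nonneg (mul_nonpos_of_nonneg_of_nonpos hc0.le hs)
        (pow_nonneg (hpos s hs).le ν)
    linarith
  have hmono : StrictMonoOn z (Set.Iic 0) := by
    intro s hs t ht hst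
    simp only [Set.mem_Iic] at hs ht
    by_contra h
    push_neg at h
    have e1 := hrel s hs
    have e2 := hrel t ht
    have hps := pow_pos (hpos s hs) ν
    have hpt := pow_pos (hpos t ht) ν
    rcases eq_or_lt_of_le h with heq | hlt
    · -- z t = z s forces s = t
      rw [heq] at e2
      have hmul : (s - t) * (c * z s ^ ν) = 0 := by nlinarith
      rcases mul_eq_zero.mp hmul with h' | h'
      · exact absurd (by linarith : s = t) (ne_of_lt hst)
      · nlinarith [mul_pos hc0 hps]
    · -- z t < z s ≤ 1, derive contradiction
      have hb1 : z s ≤ 1 := hle s hs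
      have key : (1 - z t) * z s ^ ν > (1 - z s) * z t ^ ν := by
        have h1 : (1 - z s) * z s ^ ν < (1 - z t) * z s ^ ν :=
          mul_lt_mul_of_pos_right (by linarith) hps
        have h2 : (1 - z s) * z t ^ ν ≤ (1 - z s) * z s ^ ν :=
          mul_le_mul_of_nonneg_left (pow_le_pow_left₀ (hpos t ht).le hlt.le ν)
            (by linarith)
        linarith
      -- (1 - z u) = -c u (z u)^ν, so key gives c (s - t) (z s)^ν (z t)^ν > 0
      nlinarith [mul_pos (mul_pos hc0 hps) hpt, mul_pos hps hpt]
  refine ⟨fun s hs => ⟨hpos s hs, hle s hs⟩, hmono, ?_⟩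
  rw [tendsto_order]
  constructor
  · intro a ha
    filter_upwards [Filter.eventually_le_atBot 0] with s hs
    exact lt_trans ha (hpos s hs)
  · intro a ha
    rw [Filter.eventually_atBot]
    refine ⟨min (-1) (-(1 / (c * a ^ ν))), fun s hsle => ?_⟩
    have hs0 : s ≤ 0 := le_trans hsle (le_trans (min_le_left _ _) (by norm_num))
    have hsneg : s ≤ -(1 / (c * a ^ ν)) := le_trans hsle (min_le_right _ _)
    have hzs := hpos s hs0
    have e := hrel s hs0
    have hza : 0 < a ^ ν := pow_pos ha ν
    have hca : 0 < c * a ^ ν := mul_pos hc0 hza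
    have h1 : c * (-s) * z s ^ ν = 1 - z s := by linear_combination -e
    have hdiv : 1 / (c * a ^ ν) ≤ -s := by linarith
    have h2 : 1 ≤ -s * (c * a ^ ν) := (div_le_iff₀ hca).mp hdiv
    have hsp : 0 < -s := lt_of_lt_of_le (by positivity) hdiv
    have hzν : z s ^ ν < a ^ ν := by
      nlinarith [mul_pos hc0 hsp]
    exact lt_of_pow_lt_pow_left₀ ν ha.le hzν
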